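/- Let κ be a semi-separable measure kernel with R₀ ≤ 1. Then the zero function is the only w ∈ M^b₊(Ω) with w = F(w). -/

import Mathlib

set_option synthInstance.maxHeartbeats 1000000
set_option maxHeartbeats 4000000

open MeasureTheory

namespace Stmt9Aux

section Abstract
variable {A : Type*} [NormedRing A] [NormedAlgebra ℝ A] [CompleteSpace A]

/-- A closed multiplicative cone of "positive" elements in a Banach algebra. -/
structure IsGoodCone (P : A → Prop) : Prop where
  one : P 1
  mul : ∀ {a b : A}, P a → P b → P (a * b)
  smul : ∀ {c : ℝ} {a : A}, 0 ≤ c → P a → P (c • a)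
  htsum : ∀ {F : ℕ → A}, Summable F → (∀ n, P (F n)) → P (∑' n, F n)
  norm_one : ‖(1 : A)‖ ≤ 1

variable {P : A → Prop}

omit [CompleteSpace A] in
lemma IsGoodCone.pow (hP : IsGoodCone P) {a : A} (h : P a) : ∀ n, P (a ^ n)
  | 0 => by rw [pow_zero]; exact hP.one
  | n + 1 => by rw [pow_succ]; exact hP.mul (hP.pow h n) h

omit [NormedAlgebra ℝ A] in
lemma val_inv_oneSub {t : A} (ht : ‖t‖ < 1) :
    (↑(Units.oneSub t ht)⁻¹ : A) = ∑' n : ℕ, t ^ n := rfl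

lemma inv_step (hP : IsGoodCone P) {K : A} {lam mu : ℝ} (hle : mu ≤ lam)
    (U V : Aˣ) (hU : (U : A) = lam • 1 - K) (hV : (V : A) = mu • 1 - K)
    (hpos : P (↑U⁻¹ : A)) (hsmall : (lam - mu) * ‖(↑U⁻¹ : A)‖ < 1) :
    P (↑V⁻¹ : A) := by
  have hts : P ((lam - mu) • (↑U⁻¹ : A)) := hP.smul (by linarith) hpos
  have ht : ‖(lam - mu) • (↑U⁻¹ : A)‖ < 1 := by
    rw [norm_smul, Real.norm_eq_abs, abs_of_nonneg (by linarith : (0:ℝ) ≤ lam - mu)]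
    exact hsmall
  have hVU : V = U * Units.oneSub _ ht := by
    apply Units.ext
    rw [Units.val_mul, Units.val_oneSub, hV]
    rw [mul_sub, mul_one, mul_smul_comm, hU]
    rw [show (lam • 1 - K) * (↑U⁻¹ : A) = (1 : A) by rw [← hU]; exact U.mul_inv]
    module
  have hinv : (↑V⁻¹ : A) = (∑' n : ℕ, ((lam - mu) • (↑U⁻¹ : A)) ^ n) * ↑U⁻¹ := by
    rw [hVU, mul_inv_rev, Units.val_mul, val_inv_oneSub]
  rw [hinv]
  exact hP.mul (hP.htsum (summable_geometric_of_norm_lt_one ht) (fun n => hP.pow hts n)) hpos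

lemma inv_large (hP : IsGoodCone P) {K : A} (hK : P K) {lam : ℝ} (hlam : ‖K‖ < lam)
    (U : Aˣ) (hU : (U : A) = lam • 1 - K) : P (↑U⁻¹ : A) := by
  have hlam0 : 0 < lam := lt_of_le_of_lt (norm_nonneg K) hlam
  have hts : P (lam⁻¹ • K) := hP.smul (by positivity) hK
  have ht : ‖lam⁻¹ • K‖ < 1 := by
    rw [norm_smul, Real.norm_eq_abs, abs_of_pos (by positivity : (0:ℝ) < lam⁻¹)]
    rw [inv_mul_lt_one₀ hlam0]
    exact hlam
  have hU0 : ((lam • 1 : A) * (lam⁻¹ • 1)) = 1 := by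
    rw [smul_mul_smul_comm, mul_one, mul_inv_cancel₀ hlam0.ne', one_smul]
  have hU0' : ((lam⁻¹ • 1 : A) * (lam • 1)) = 1 := by
    rw [smul_mul_smul_comm, mul_one, inv_mul_cancel₀ hlam0.ne', one_smul]
  have hVU : U = (⟨lam • 1, lam⁻¹ • 1, hU0, hU0'⟩ : Aˣ) * Units.oneSub _ ht := by
    apply Units.ext
    rw [Units.val_mul, Units.val_oneSub, hU]
    show lam • (1:A) - K = (lam • 1) * (1 - lam⁻¹ • K)
    rw [mul_sub, mul_one, smul_mul_assoc, one_mul, smul_smul, mul_inv_cancel₀ hlam0.ne', one_smul]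
  have hinv : (↑U⁻¹ : A) = (∑' n : ℕ, (lam⁻¹ • K) ^ n) * (lam⁻¹ • 1) := by
    rw [hVU, mul_inv_rev, Units.val_mul, val_inv_oneSub]
    rfl
  rw [hinv]
  exact hP.mul (hP.htsum (summable_geometric_of_norm_lt_one ht) (fun n => hP.pow hts n))
    (hP.smul (by positivity) hP.one)

lemma norm_inv_up (hP : IsGoodCone P) {K : A} {lam mu : ℝ} (hle : lam ≤ mu)
    (U V : Aˣ) (hU : (U : A) = lam • 1 - K) (hV : (V : A) = mu • 1 - K)
    (hsmall : (mu - lam) * ‖(↑U⁻¹ : A)‖ ≤ 1/2) :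
    ‖(↑V⁻¹ : A)‖ ≤ 2 * ‖(↑U⁻¹ : A)‖ := by
  have ht : ‖-((mu - lam) • (↑U⁻¹ : A))‖ < 1 := by
    rw [norm_neg, norm_smul, Real.norm_eq_abs, abs_of_nonneg (by linarith : (0:ℝ) ≤ mu - lam)]
    linarith
  have ht2 : ‖-((mu - lam) • (↑U⁻¹ : A))‖ ≤ 1/2 := by
    rw [norm_neg, norm_smul, Real.norm_eq_abs, abs_of_nonneg (by linarith : (0:ℝ) ≤ mu - lam)]
    exact hsmall
  have hVU : V = U * Units.oneSub _ ht := by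
    apply Units.ext
    rw [Units.val_mul, Units.val_oneSub, hV, sub_neg_eq_add]
    rw [mul_add, mul_one, mul_smul_comm, hU]
    rw [show (lam • 1 - K) * (↑U⁻¹ : A) = (1 : A) by rw [← hU]; exact U.mul_inv]
    module
  have hinv : (↑V⁻¹ : A) = (∑' n : ℕ, (-((mu - lam) • (↑U⁻¹ : A))) ^ n) * ↑U⁻¹ := by
    rw [hVU, mul_inv_rev, Units.val_mul, val_inv_oneSub]
  rw [hinv]
  calc ‖(∑' n : ℕ, (-((mu - lam) • (↑U⁻¹ : A))) ^ n) * (↑U⁻¹ : A)‖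
      ≤ ‖∑' n : ℕ, (-((mu - lam) • (↑U⁻¹ : A))) ^ n‖ * ‖(↑U⁻¹ : A)‖ := norm_mul_le _ _
    _ ≤ 2 * ‖(↑U⁻¹ : A)‖ := by
        apply mul_le_mul_of_nonneg_right _ (norm_nonneg _)
        refine (tsum_geometric_le_of_norm_lt_one _ ht).trans ?_
        have h1 : ‖(1 : A)‖ ≤ 1 := hP.norm_one
        have h2 : (1 - ‖-((mu - lam) • (↑U⁻¹ : A))‖)⁻¹ ≤ 2 := by
          rw [inv_le_comm₀ (by linarith) (by norm_num)]
          linarith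
        linarith

lemma resolvent_pos (hP : IsGoodCone P) {K : A} (hK : P K)
    (hunit : ∀ lam : ℝ, 1 < lam → IsUnit (algebraMap ℝ A lam - K))
    {mu : ℝ} (hmu : 1 < mu) (U : Aˣ) (hU : (U : A) = algebraMap ℝ A mu - K) :
    P (↑U⁻¹ : A) := by
  classical
  simp only [Algebra.algebraMap_eq_smul_one] at hunit hU
  set Q : ℝ → Prop := fun lam => ∀ V : Aˣ, ((V : A) = lam • 1 - K) → P (↑V⁻¹ : A) with hQdef
  have hQbig : ∀ lam : ℝ, ‖K‖ < lam → Q lam := fun lam h V hV => inv_large hP hK h V hV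
  set S : Set ℝ := {lam | mu ≤ lam ∧ ∀ t, lam ≤ t → Q t} with hSdef
  have hSne : (max mu (‖K‖+1)) ∈ S := by
    refine ⟨le_max_left _ _, fun t ht => hQbig t ?_⟩
    have := le_max_right mu (‖K‖+1)
    linarith
  have hbdd : BddBelow S := ⟨mu, fun s hs => hs.1⟩
  set c := sInf S with hcdef
  have hcmu : mu ≤ c := le_csInf ⟨_, hSne⟩ (fun s hs => hs.1)
  have hc1 : 1 < c := lt_of_lt_of_le hmu hcmu
  have hgt : ∀ t, c < t → Q t := by
    intro t ht
    obtain ⟨s, hs, hst⟩ := exists_lt_of_csInf_lt ⟨_, hSne⟩ ht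
    exact hs.2 t hst.le
  obtain ⟨Uc, hUc⟩ := hunit c hc1
  set M := ‖(↑Uc⁻¹ : A)‖ with hMdef
  have hM0 : 0 ≤ M := norm_nonneg _
  have hQc : Q c := by
    set ε := 1/(4*(M+1)) with hε
    have hεpos : 0 < ε := by positivity
    obtain ⟨Ut, hUt⟩ := hunit (c+ε) (by linarith)
    have hPUt : P (↑Ut⁻¹ : A) := hgt _ (by linarith) Ut hUt
    have hMt : ‖(↑Ut⁻¹ : A)‖ ≤ 2 * M := by
      refine norm_inv_up hP (by linarith : c ≤ c + ε) Uc Ut hUc hUt ?_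
      have h3 : (c + ε - c) * M = M/(4*(M+1)) := by rw [hε]; ring
      rw [h3, div_le_iff₀ (by positivity)]
      nlinarith
    intro V hV
    refine inv_step hP (by linarith : c ≤ c + ε) Ut V hUt hV hPUt ?_
    have h1 : (c + ε - c) * ‖(↑Ut⁻¹ : A)‖ ≤ ε * (2*M) := by
      rw [show c + ε - c = ε by ring]
      exact mul_le_mul_of_nonneg_left hMt hεpos.le
    have h2 : ε * (2*M) < 1 := by
      rw [hε, div_mul_eq_mul_div, one_mul, div_lt_one (by positivity)]
      nlinarith
    linarith
  have hcle : c ≤ mu := by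
    by_contra hlt
    push_neg at hlt
    set ε' := 1/(2*(M+1)) with hε'
    have hε'pos : 0 < ε' := by positivity
    have hmem : max mu (c - ε') ∈ S := by
      refine ⟨le_max_left _ _, fun t ht => ?_⟩
      rcases lt_or_ge t c with h | h
      · intro V hV
        refine inv_step hP h.le Uc V hUc hV (hQc Uc hUc) ?_
        have h3 : c - t ≤ ε' := by
          have := le_trans (le_max_right mu (c - ε')) ht
          linarith
        have h5 : (c - t) * M ≤ ε' * M := mul_le_mul_of_nonneg_right h3 hM0
        have h4 : ε' * M < 1 := by
          rw [hε', div_mul_eq_mul_div, one_mul, div_lt_one (by positivity)]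
          nlinarith
        linarith
      · rcases h.eq_or_lt with h2 | h2
        · rw [← h2]; exact hQc
        · exact hgt t h2
    have h2 : c ≤ max mu (c - ε') := csInf_le hbdd hmem
    rcases max_cases mu (c - ε') with ⟨hm, _⟩ | ⟨hm, _⟩ <;> rw [hm] at h2 <;> linarith
  have hceq : c = mu := le_antisymm hcle hcmu
  exact hQc U (by rw [hceq]; exact hU)

end Abstract

section Concrete
variable {Ω : Type*}

/-- positivity of an operator on `ℓ^∞` -/
def Pos (T : lp (fun _ : Ω => ℝ) ⊤ →L[ℝ] lp (fun _ : Ω => ℝ) ⊤) : Prop :=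
  ∀ g : lp (fun _ : Ω => ℝ) ⊤, (∀ x, 0 ≤ (g : ∀ _ : Ω, ℝ) x) → ∀ x, 0 ≤ (T g : ∀ _ : Ω, ℝ) x

/-- evaluation at a point as a continuous linear map -/
noncomputable def evx (x : Ω) : lp (fun _ : Ω => ℝ) ⊤ →L[ℝ] ℝ :=
  LinearMap.mkContinuous
    { toFun := fun f => (f : ∀ _ : Ω, ℝ) x
      map_add' := fun f g => rfl
      map_smul' := fun c f => rfl } 1
    (fun f => by rw [one_mul]; exact lp.norm_apply_le_norm ENNReal.top_ne_zero f x)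

@[simp] lemma evx_apply (x : Ω) (f : lp (fun _ : Ω => ℝ) ⊤) : evx x f = (f : ∀ _ : Ω, ℝ) x := rfl

lemma pos_one : Pos (1 : lp (fun _ : Ω => ℝ) ⊤ →L[ℝ] lp (fun _ : Ω => ℝ) ⊤) :=
  fun _ hg x => hg x

lemma pos_mul {S T : lp (fun _ : Ω => ℝ) ⊤ →L[ℝ] lp (fun _ : Ω => ℝ) ⊤}
    (hS : Pos S) (hT : Pos T) : Pos (S * T) :=
  fun g hg x => hS (T g) (hT g hg) x

lemma pos_smul {T : lp (fun _ : Ω => ℝ) ⊤ →L[ℝ] lp (fun _ : Ω => ℝ) ⊤} {c : ℝ}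
    (hc : 0 ≤ c) (hT : Pos T) : Pos (c • T) := by
  intro g hg x
  have h : ((c • T) g : ∀ _ : Ω, ℝ) x = c * (T g : ∀ _ : Ω, ℝ) x := rfl
  rw [h]
  exact mul_nonneg hc (hT g hg x)

lemma pos_tsum {F : ℕ → (lp (fun _ : Ω => ℝ) ⊤ →L[ℝ] lp (fun _ : Ω => ℝ) ⊤)}
    (hs : Summable F) (h : ∀ n, Pos (F n)) : Pos (∑' n, F n) := by
  intro g hg x
  have h1 : (∑' n, F n) g = ∑' n, (F n) g :=
    (ContinuousLinearMap.apply ℝ (lp (fun _ : Ω => ℝ) ⊤) g).map_tsum hs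
  have h2 : Summable fun n => (F n) g :=
    (ContinuousLinearMap.apply ℝ (lp (fun _ : Ω => ℝ) ⊤) g).summable hs
  have h3 : (evx x) ((∑' n, (F n) g : lp (fun _ : Ω => ℝ) ⊤)) = ∑' n, evx x ((F n) g) :=
    (evx x).map_tsum h2
  have h4 : ((∑' n, F n) g : ∀ _ : Ω, ℝ) x = ∑' n, ((F n) g : ∀ _ : Ω, ℝ) x := by
    rw [h1, ← evx_apply]
    simpa using h3
  rw [h4]
  exact tsum_nonneg fun n => h n g hg x

lemma goodConePos : IsGoodCone (Pos (Ω := Ω)) where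
  one := pos_one
  mul := fun h1 h2 => pos_mul h1 h2
  smul := fun hc hT => pos_smul hc hT
  htsum := fun hs h => pos_tsum hs h
  norm_one := ContinuousLinearMap.norm_id_le

end Concrete

end Stmt9Aux
open Stmt9Aux in
/-- For a semi-separable measure kernel with basic reproduction number R₀ ≤ 1
(spectral radius of the induced next generation operator K on ℓ∞(Ω)),
the zero function is the only fixed point w = F(w) in M^b₊(Ω). -/
theorem stmt9 {Ω : Type*} [MeasurableSpace Ω]
    (κ : Ω → Measure Ω) [∀ x, IsFiniteMeasure (κ x)]
    (ν : Measure Ω) [IsFiniteMeasure ν] (hν : ν ≠ 0)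
    (k0 : Ω → ℝ) (hk0m : Measurable k0) (hk0nn : ∀ x, 0 ≤ k0 x)
    (hk0b : ∃ C, ∀ x, k0 x ≤ C) (hk0ne : k0 ≠ 0)
    (δ : ℝ) (hδ0 : 0 < δ) (hδ1 : δ ≤ 1)
    (hsep : ∀ s : Set Ω, MeasurableSet s → ∀ x,
      δ * (ν s).toReal * k0 x ≤ (κ x s).toReal ∧ (κ x s).toReal ≤ (ν s).toReal * k0 x)
    (K : lp (fun _ : Ω => ℝ) ⊤ →L[ℝ] lp (fun _ : Ω => ℝ) ⊤)
    (hK : ∀ g : lp (fun _ : Ω => ℝ) ⊤, ∀ x : Ω,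
      (K g : ∀ _ : Ω, ℝ) x = ∫ ξ, (g : ∀ _ : Ω, ℝ) ξ ∂ κ x)
    (hR : spectralRadius ℝ K ≤ 1) :
    ∀ w : Ω → ℝ, Measurable w → (∀ x, 0 ≤ w x) → (∃ C, ∀ x, w x ≤ C) →
      (∀ x, w x = ∫ ξ, (1 - Real.exp (-(w ξ))) ∂ κ x) →
      ∀ x, w x = 0 := by
  classical
  rintro w hwm hwnn ⟨C, hwb⟩ hfix x0
  have hC0 : (0:ℝ) ≤ C := le_trans (hwnn x0) (hwb x0)
  -- elementary facts about f y = 1 - exp (-y)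
  have hexp_sq : ∀ y : ℝ, Real.exp (-y) = Real.exp (-(y/2)) * Real.exp (-(y/2)) := by
    intro y; rw [← Real.exp_add]; ring_nf
  have hf_nonneg : ∀ y : ℝ, 0 ≤ y → 0 ≤ 1 - Real.exp (-y) := by
    intro y hy
    have h1 : Real.exp (-y) ≤ Real.exp 0 := Real.exp_le_exp.mpr (by linarith)
    rw [Real.exp_zero] at h1; linarith
  have hf_le1 : ∀ y : ℝ, 1 - Real.exp (-y) ≤ 1 := fun y => by
    have := Real.exp_pos (-y); linarith
  have hf_le : ∀ y : ℝ, 1 - Real.exp (-y) ≤ y := fun y => by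
    have := Real.add_one_le_exp (-y); linarith
  have hf_id : ∀ y : ℝ,
      1 - Real.exp (-(y/2)) = (1 - Real.exp (-y))/2 + (1 - Real.exp (-(y/2)))^2/2 := by
    intro y
    have h := hexp_sq y
    nlinarith [h]
  -- the three relevant integrands
  set fw : Ω → ℝ := fun ξ => 1 - Real.exp (-(w ξ)) with hfw_def
  set fw2 : Ω → ℝ := fun ξ => 1 - Real.exp (-(w ξ / 2)) with hfw2_def
  have hfwm : Measurable fw := measurable_const.sub ((hwm.neg).exp)
  have hfw2m : Measurable fw2 := measurable_const.sub (((hwm.div_const 2).neg).exp)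
  have hfw_nn : ∀ ξ, 0 ≤ fw ξ := fun ξ => hf_nonneg _ (hwnn ξ)
  have hfw2_nn : ∀ ξ, 0 ≤ fw2 ξ := fun ξ => hf_nonneg _ (by linarith [hwnn ξ])
  have hfw_le1 : ∀ ξ, fw ξ ≤ 1 := fun ξ => hf_le1 _
  have hfw2_le1 : ∀ ξ, fw2 ξ ≤ 1 := fun ξ => hf_le1 _
  -- integrability of bounded measurable functions
  have hint : ∀ (μ : Measure Ω) [IsFiniteMeasure μ], ∀ (g : Ω → ℝ) (B : ℝ),
      Measurable g → (∀ ξ, |g ξ| ≤ B) → Integrable g μ := by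
    intro μ hμ g B hgm hgb
    exact Integrable.mono' (integrable_const B) hgm.aestronglyMeasurable
      (Filter.Eventually.of_forall (fun ξ => by simpa using hgb ξ))
  -- comparison of integrals against κ y with integrals against ν
  have comp : ∀ (g : Ω → ℝ) (B : ℝ), Measurable g → (∀ ξ, 0 ≤ g ξ) → (∀ ξ, g ξ ≤ B) →
      ∀ y : Ω, δ * k0 y * ∫ ξ, g ξ ∂ν ≤ ∫ ξ, g ξ ∂(κ y) ∧
        ∫ ξ, g ξ ∂(κ y) ≤ k0 y * ∫ ξ, g ξ ∂ν := by
    intro g B hgm hg0 hgB y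
    have hgb : ∀ ξ, |g ξ| ≤ B := fun ξ => by rw [abs_of_nonneg (hg0 ξ)]; exact hgB ξ
    have hgν : Integrable g ν := hint ν g B hgm hgb
    have hgκ : Integrable g (κ y) := hint (κ y) g B hgm hgb
    constructor
    · have hle : (ENNReal.ofReal (δ * k0 y)) • ν ≤ κ y := by
        rw [Measure.le_iff]
        intro s hs
        have h1 := (hsep s hs y).1
        rw [Measure.smul_apply, smul_eq_mul]
        have hκ_fin : κ y s ≠ ⊤ := measure_ne_top (κ y) s
        have hfin : ENNReal.ofReal (δ * k0 y) * ν s ≠ ⊤ :=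
          ENNReal.mul_ne_top ENNReal.ofReal_ne_top (measure_ne_top ν s)
        rw [← ENNReal.toReal_le_toReal hfin hκ_fin, ENNReal.toReal_mul,
          ENNReal.toReal_ofReal (mul_nonneg hδ0.le (hk0nn y))]
        calc δ * k0 y * (ν s).toReal = δ * (ν s).toReal * k0 y := by ring
          _ ≤ (κ y s).toReal := h1
      calc δ * k0 y * ∫ ξ, g ξ ∂ν
          = (ENNReal.ofReal (δ * k0 y)).toReal * ∫ ξ, g ξ ∂ν := by
            rw [ENNReal.toReal_ofReal (mul_nonneg hδ0.le (hk0nn y))]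
        _ = ∫ ξ, g ξ ∂((ENNReal.ofReal (δ * k0 y)) • ν) := by
            rw [integral_smul_measure, smul_eq_mul]
        _ ≤ ∫ ξ, g ξ ∂(κ y) :=
            integral_mono_measure hle (Filter.Eventually.of_forall hg0) hgκ
    · have hle : κ y ≤ (ENNReal.ofReal (k0 y)) • ν := by
        rw [Measure.le_iff]
        intro s hs
        have h1 := (hsep s hs y).2
        rw [Measure.smul_apply, smul_eq_mul]
        have hκ_fin : κ y s ≠ ⊤ := measure_ne_top (κ y) s
        have hfin : ENNReal.ofReal (k0 y) * ν s ≠ ⊤ :=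
          ENNReal.mul_ne_top ENNReal.ofReal_ne_top (measure_ne_top ν s)
        rw [← ENNReal.toReal_le_toReal hκ_fin hfin, ENNReal.toReal_mul,
          ENNReal.toReal_ofReal (hk0nn y)]
        calc (κ y s).toReal ≤ (ν s).toReal * k0 y := h1
          _ = k0 y * (ν s).toReal := by ring
      calc ∫ ξ, g ξ ∂(κ y)
          ≤ ∫ ξ, g ξ ∂((ENNReal.ofReal (k0 y)) • ν) :=
            integral_mono_measure hle (Filter.Eventually.of_forall hg0)
              (hgν.smul_measure ENNReal.ofReal_ne_top)
        _ = (ENNReal.ofReal (k0 y)).toReal * ∫ ξ, g ξ ∂ν := by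
            rw [integral_smul_measure, smul_eq_mul]
        _ = k0 y * ∫ ξ, g ξ ∂ν := by rw [ENNReal.toReal_ofReal (hk0nn y)]
  -- the two key scalars
  set a : ℝ := ∫ ξ, fw ξ ∂ν with ha_def
  have ha0 : 0 ≤ a := integral_nonneg hfw_nn
  rcases ha0.eq_or_lt with ha | ha
  · -- a = 0 : directly w = 0
    have h1 : w x0 ≤ k0 x0 * a := by
      rw [hfix x0]
      exact (comp fw 1 hfwm hfw_nn hfw_le1 x0).2
    rw [← ha, mul_zero] at h1
    exact le_antisymm h1 (hwnn x0)
  · -- a > 0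
    set b : ℝ := ∫ ξ, (fw2 ξ)^2 ∂ν with hb_def
    have hsqm : Measurable (fun ξ => (fw2 ξ)^2) := hfw2m.pow_const 2
    have hsq_nn : ∀ ξ, 0 ≤ (fw2 ξ)^2 := fun ξ => sq_nonneg _
    have hsq_le1 : ∀ ξ, (fw2 ξ)^2 ≤ 1 := fun ξ => by
      nlinarith [hfw2_nn ξ, hfw2_le1 ξ]
    have hb0 : 0 < b := by
      rcases (integral_nonneg hsq_nn : (0:ℝ) ≤ b).eq_or_lt with hb | hb
      · exfalso
        have hbint : Integrable (fun ξ => (fw2 ξ)^2) ν :=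
          hint ν _ 1 hsqm (fun ξ => by rw [abs_of_nonneg (hsq_nn ξ)]; exact hsq_le1 ξ)
        have hsq0 : (fun ξ => (fw2 ξ)^2) =ᵐ[ν] 0 :=
          (integral_eq_zero_iff_of_nonneg hsq_nn hbint).mp hb.symm
        have hz : fw2 =ᵐ[ν] 0 := by
          filter_upwards [hsq0] with ξ hξ
          have : (fw2 ξ)^2 = 0 := hξ
          exact (pow_eq_zero_iff two_ne_zero).mp this
        have h2 : ∫ ξ, 2 * fw2 ξ ∂ν = 0 := by
          have : (fun ξ => 2 * fw2 ξ) =ᵐ[ν] 0 := by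
            filter_upwards [hz] with ξ hξ
            simp [hξ]
          rw [integral_congr_ae this]; simp
        have h3 : a ≤ ∫ ξ, 2 * fw2 ξ ∂ν := by
          refine integral_mono (hint ν fw 1 hfwm
            (fun ξ => by rw [abs_of_nonneg (hfw_nn ξ)]; exact hfw_le1 ξ))
            ((hint ν fw2 1 hfw2m
              (fun ξ => by rw [abs_of_nonneg (hfw2_nn ξ)]; exact hfw2_le1 ξ)).const_mul 2) ?_
          intro ξ
          have := hf_id (w ξ)
          have hs := sq_nonneg (fw2 ξ)
          simp only [hfw_def, hfw2_def] at *
          nlinarith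
        linarith
      · exact hb
    -- the candidate subsolution u = w/2 in ℓ∞
    have humem : Memℓp (fun ξ => w ξ / 2) (⊤ : ENNReal) := by
      apply memℓp_infty
      refine ⟨C, ?_⟩
      rintro r ⟨ξ, rfl⟩
      have h1 : |w ξ / 2| ≤ C := by
        rw [abs_of_nonneg (by linarith [hwnn ξ])]
        linarith [hwb ξ, hwnn ξ]
      show ‖w ξ / 2‖ ≤ C
      rw [Real.norm_eq_abs]
      exact h1
    set u : lp (fun _ : Ω => ℝ) ⊤ := ⟨fun ξ => w ξ / 2, humem⟩ with hu_def
    have hu_coe : ∀ ξ, (u : ∀ _ : Ω, ℝ) ξ = w ξ / 2 := fun ξ => rfl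
    set η : ℝ := δ * b / a with hη_def
    have hη : 0 < η := by positivity
    -- the key pointwise inequality K u ≥ (1+η) u
    have hKu : ∀ y : Ω, (1 + η) * ((u : ∀ _ : Ω, ℝ) y) ≤ (K u : ∀ _ : Ω, ℝ) y := by
      intro y
      have hKuy : (K u : ∀ _ : Ω, ℝ) y = ∫ ξ, w ξ / 2 ∂(κ y) := hK u y
      have h_half : Integrable (fun ξ => w ξ / 2) (κ y) :=
        hint (κ y) _ C (hwm.div_const 2)
          (fun ξ => by rw [abs_of_nonneg (by linarith [hwnn ξ])]; linarith [hwb ξ, hwnn ξ])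
      have h_fw2 : Integrable fw2 (κ y) :=
        hint (κ y) fw2 1 hfw2m (fun ξ => by rw [abs_of_nonneg (hfw2_nn ξ)]; exact hfw2_le1 ξ)
      have h_fw : Integrable fw (κ y) :=
        hint (κ y) fw 1 hfwm (fun ξ => by rw [abs_of_nonneg (hfw_nn ξ)]; exact hfw_le1 ξ)
      have h_sq : Integrable (fun ξ => (fw2 ξ)^2) (κ y) :=
        hint (κ y) _ 1 hsqm (fun ξ => by rw [abs_of_nonneg (hsq_nn ξ)]; exact hsq_le1 ξ)
      have step1 : ∫ ξ, fw2 ξ ∂(κ y) ≤ ∫ ξ, w ξ / 2 ∂(κ y) := by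
        refine integral_mono h_fw2 h_half ?_
        intro ξ
        exact hf_le (w ξ / 2)
      have step2 : ∫ ξ, fw2 ξ ∂(κ y)
          = (∫ ξ, fw ξ ∂(κ y))/2 + (∫ ξ, (fw2 ξ)^2 ∂(κ y))/2 := by
        rw [← integral_div, ← integral_div, ← integral_add (h_fw.div_const 2) (h_sq.div_const 2)]
        refine integral_congr_ae (Filter.Eventually.of_forall (fun ξ => ?_))
        exact hf_id (w ξ)
      have step3 : δ * k0 y * b ≤ ∫ ξ, (fw2 ξ)^2 ∂(κ y) :=
        (comp _ 1 hsqm hsq_nn hsq_le1 y).1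
      have step4 : w y ≤ k0 y * a := by
        rw [hfix y]
        exact (comp fw 1 hfwm hfw_nn hfw_le1 y).2
      have hky : w y / a ≤ k0 y := by
        rw [div_le_iff₀ ha]
        linarith [step4]
      have e1 : ∫ ξ, fw ξ ∂(κ y) = w y := (hfix y).symm
      have h5 : δ * (w y / a) * b ≤ δ * k0 y * b := by
        apply mul_le_mul_of_nonneg_right _ hb0.le
        exact mul_le_mul_of_nonneg_left hky hδ0.le
      have h6 : (1+η) * (w y / 2) = w y / 2 + (δ * (w y / a) * b)/2 := by
        rw [hη_def]
        field_simp
      rw [hKuy, hu_coe y, h6]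
      have h7 : w y / 2 + (δ * k0 y * b)/2 ≤ ∫ ξ, w ξ / 2 ∂(κ y) := by
        have := step2
        rw [e1] at this
        linarith [step1, step3]
      linarith
    -- operator positivity and unit structure
    have hKpos : Pos K := fun g hg y => by
      rw [hK g y]
      exact integral_nonneg hg
    have hunit : ∀ lam : ℝ, 1 < lam →
        IsUnit (algebraMap ℝ (lp (fun _ : Ω => ℝ) ⊤ →L[ℝ] lp (fun _ : Ω => ℝ) ⊤) lam - K) := by
      intro lam hl
      have h2 : spectralRadius ℝ K < ‖lam‖₊ := by
        refine lt_of_le_of_lt hR ?_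
        rw [← ENNReal.coe_one, ENNReal.coe_lt_coe, ← NNReal.coe_lt_coe]
        have h3 : ‖lam‖ = lam := abs_of_pos (by linarith)
        simpa [h3] using hl
      have h4 := spectrum.mem_resolventSet_of_spectralRadius_lt h2
      rwa [resolventSet, Set.mem_setOf_eq] at h4
    obtain ⟨U, hU⟩ := hunit (1+η) (by linarith)
    have hPinv : Pos (↑U⁻¹ : lp (fun _ : Ω => ℝ) ⊤ →L[ℝ] lp (fun _ : Ω => ℝ) ⊤) :=
      resolvent_pos (A := lp (fun _ : Ω => ℝ) ⊤ →L[ℝ] lp (fun _ : Ω => ℝ) ⊤) (P := Pos)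
        goodConePos hKpos hunit (by linarith) U hU
    set q : lp (fun _ : Ω => ℝ) ⊤ := K u - (1+η) • u with hq_def
    have hq0 : ∀ y, 0 ≤ (q : ∀ _ : Ω, ℝ) y := by
      intro y
      have h : (q : ∀ _ : Ω, ℝ) y = (K u : ∀ _ : Ω, ℝ) y - (1+η) * ((u : ∀ _ : Ω, ℝ) y) := rfl
      rw [h]
      linarith [hKu y]
    have hUu : (↑U : lp (fun _ : Ω => ℝ) ⊤ →L[ℝ] lp (fun _ : Ω => ℝ) ⊤) u = -q := by
      rw [hU]
      rw [ContinuousLinearMap.sub_apply, ContinuousLinearMap.algebraMap_apply, hq_def]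
      abel
    have hfinal : ∀ y, (u : ∀ _ : Ω, ℝ) y ≤ 0 := by
      intro y
      have h1 : (↑U⁻¹ : lp (fun _ : Ω => ℝ) ⊤ →L[ℝ] lp (fun _ : Ω => ℝ) ⊤)
          ((↑U : lp (fun _ : Ω => ℝ) ⊤ →L[ℝ] lp (fun _ : Ω => ℝ) ⊤) u) = u := by
        rw [← ContinuousLinearMap.mul_apply, U.inv_mul, ContinuousLinearMap.one_apply]
      have h2 : u = -((↑U⁻¹ : lp (fun _ : Ω => ℝ) ⊤ →L[ℝ] lp (fun _ : Ω => ℝ) ⊤) q) := by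
        rw [← h1, hUu, map_neg]
      have h3 : 0 ≤ ((↑U⁻¹ : lp (fun _ : Ω => ℝ) ⊤ →L[ℝ] lp (fun _ : Ω => ℝ) ⊤) q
          : ∀ _ : Ω, ℝ) y := hPinv q hq0 y
      have h4 : (u : ∀ _ : Ω, ℝ) y
          = -(((↑U⁻¹ : lp (fun _ : Ω => ℝ) ⊤ →L[ℝ] lp (fun _ : Ω => ℝ) ⊤) q
            : ∀ _ : Ω, ℝ) y) := by
        rw [h2]
        rfl
      rw [h4]
      linarith
    have h5 := hfinal x0
    rw [hu_coe x0] at h5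
    have h6 := hwnn x0
    linarith
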